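/- Let n = k² be a perfect square with n > 9 (so k ≥ 4). In the lollipop graph L_n, every nonempty vertex subset S satisfies ρ(S) ≤ k − 1 = √n − 1, and equality is attained by the vertex set of the clique C_√n; i.e., the densest subgraph of L_n is the unprotected clique C_√n and ρ*_{L_n} = √n − 1. -/

import Mathlib

open Finset

/-- Number of edges of `G` with both endpoints in `S`. -/
def edgesIn {V : Type*} [Fintype V] [DecidableEq V] (G : SimpleGraph V)
    [DecidableRel G.Adj] (S : Finset V) : ℕ :=
  (G.edgeFinset.filter (fun e => ∀ v ∈ e, v ∈ S)).card

/-- Density `ρ(S) = 2 e(S) / |S|` of the subgraph induced by `S`. -/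
noncomputable def rho {V : Type*} [Fintype V] [DecidableEq V] (G : SimpleGraph V)
    [DecidableRel G.Adj] (S : Finset V) : ℝ :=
  2 * (edgesIn G S : ℝ) / S.card

/-- Fairness regularizer `r1(S) = |S ∩ Sp| / |S|`. -/
noncomputable def r1 {V : Type*} [DecidableEq V] (Sp S : Finset V) : ℝ :=
  ((S ∩ Sp).card : ℝ) / S.card

/-- The lollipop graph `L_n` on `n = k²` vertices: vertices `0, …, k-1` form a
clique (the unprotected vertices), vertices `k, …, k²-1` form a path (the
protected vertices), and one endpoint of the path (vertex `k`) is joined to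
one vertex of the clique (vertex `k-1`). -/
def lollipop (k : ℕ) : SimpleGraph (Fin (k * k)) where
  Adj u v := u ≠ v ∧ ((u.val < k ∧ v.val < k) ∨
      (u.val + 1 = v.val ∧ k ≤ v.val) ∨ (v.val + 1 = u.val ∧ k ≤ u.val))
  symm := by
    constructor
    intro u v h
    refine ⟨Ne.symm h.1, ?_⟩
    rcases h.2 with h | h | h
    · exact Or.inl ⟨h.2, h.1⟩
    · exact Or.inr (Or.inr h)
    · exact Or.inr (Or.inl h)
  loopless := by constructor; intro v h; exact h.1 rfl

instance lollipopDecAdj (k : ℕ) : DecidableRel (lollipop k).Adj :=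
  fun _ _ => inferInstanceAs (Decidable (_ ∧ _))

/-- The protected subset of the lollipop graph: the vertices of the path. -/
def lollipopProtected (k : ℕ) : Finset (Fin (k * k)) :=
  Finset.univ.filter (fun v => k ≤ v.val)

/-- The vertex set of the clique `C_√n` in the lollipop graph. -/
def lollipopClique (k : ℕ) : Finset (Fin (k * k)) :=
  Finset.univ.filter (fun v => v.val < k)

-- ==== auxiliaries (same as aux.lean) ====
def cliqueSub (k : ℕ) (S : Finset (Fin (k * k))) : SimpleGraph (Fin (k * k)) where
  Adj u v := u ≠ v ∧ u ∈ S ∧ v ∈ S ∧ u.val < k ∧ v.val < k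
  symm := ⟨fun u v ⟨h1, h2, h3, h4, h5⟩ => ⟨h1.symm, h3, h2, h5, h4⟩⟩
  loopless := ⟨fun v h => h.1 rfl⟩

instance cliqueSubDec (k : ℕ) (S : Finset (Fin (k * k))) :
    DecidableRel (cliqueSub k S).Adj :=
  fun _ _ => inferInstanceAs (Decidable (_ ∧ _ ∧ _ ∧ _ ∧ _))

lemma filterA_eq (k : ℕ) (S : Finset (Fin (k * k))) :
    ((lollipop k).edgeFinset.filter (fun e => ∀ v ∈ e, v ∈ S)).filter
      (fun e => ∀ v ∈ e, v.val < k) = (cliqueSub k S).edgeFinset := by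
  ext e
  induction e using Sym2.ind with
  | _ a b =>
    simp only [Finset.mem_filter, SimpleGraph.mem_edgeFinset, SimpleGraph.mem_edgeSet,
      Sym2.mem_iff, forall_eq_or_imp, forall_eq]
    simp only [lollipop, cliqueSub]
    constructor
    · rintro ⟨⟨⟨hne, _⟩, hS1, hS2⟩, hk1, hk2⟩
      exact ⟨hne, hS1, hS2, hk1, hk2⟩
    · rintro ⟨hne, hS1, hS2, hk1, hk2⟩
      exact ⟨⟨⟨hne, Or.inl ⟨hk1, hk2⟩⟩, hS1, hS2⟩, hk1, hk2⟩

lemma neighbor_subset (k : ℕ) (S : Finset (Fin (k * k))) (v : Fin (k * k)) :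
    (cliqueSub k S).neighborFinset v ⊆ (S.filter (fun w => w.val < k)).erase v := by
  intro u hu
  rw [SimpleGraph.mem_neighborFinset] at hu
  obtain ⟨hne, _, hu2, _, hu4⟩ := hu
  exact Finset.mem_erase.mpr ⟨fun h => hne (h.symm), Finset.mem_filter.mpr ⟨hu2, hu4⟩⟩

lemma degree_zero (k : ℕ) (S : Finset (Fin (k * k))) (v : Fin (k * k))
    (hv : v ∉ S.filter (fun w => w.val < k)) : (cliqueSub k S).degree v = 0 := by
  rw [SimpleGraph.degree, Finset.card_eq_zero, Finset.eq_empty_iff_forall_notMem]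
  intro u hu
  rw [SimpleGraph.mem_neighborFinset] at hu
  exact hv (Finset.mem_filter.mpr ⟨hu.2.1, hu.2.2.2.1⟩)

lemma twoA_le (k : ℕ) (S : Finset (Fin (k * k))) :
    2 * (cliqueSub k S).edgeFinset.card
      ≤ (S.filter (fun w => w.val < k)).card * ((S.filter (fun w => w.val < k)).card - 1) := by
  set T := S.filter (fun w => w.val < k) with hT
  rw [← SimpleGraph.sum_degrees_eq_twice_card_edges]
  have h1 : ∑ v, (cliqueSub k S).degree v = ∑ v ∈ T, (cliqueSub k S).degree v :=
    (Finset.sum_subset (Finset.subset_univ T)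
      (fun v _ hv => degree_zero k S v hv)).symm
  rw [h1]
  have h2 : ∀ v ∈ T, (cliqueSub k S).degree v ≤ T.card - 1 := by
    intro v hv
    calc (cliqueSub k S).degree v ≤ (T.erase v).card :=
          Finset.card_le_card (neighbor_subset k S v)
      _ = T.card - 1 := Finset.card_erase_of_mem hv
  calc ∑ v ∈ T, (cliqueSub k S).degree v ≤ T.card • (T.card - 1) :=
        Finset.sum_le_card_nsmul T _ _ h2
    _ = T.card * (T.card - 1) := by rw [smul_eq_mul]

noncomputable def emax {n : ℕ} : Sym2 (Fin n) → Fin n :=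
  Sym2.lift ⟨fun a b => max a b, fun a b => max_comm a b⟩

lemma B_struct (k : ℕ) (S : Finset (Fin (k * k))) (e : Sym2 (Fin (k * k)))
    (he : e ∈ ((lollipop k).edgeFinset.filter (fun e => ∀ v ∈ e, v ∈ S)).filter
      (fun e => ¬ ∀ v ∈ e, v.val < k)) :
    ∃ u v : Fin (k * k), e = s(u, v) ∧ u.val + 1 = v.val ∧ k ≤ v.val ∧ u ∈ S ∧ v ∈ S ∧
      emax e = v := by
  induction e using Sym2.ind with
  | _ a b =>
    simp only [Finset.mem_filter, SimpleGraph.mem_edgeFinset, SimpleGraph.mem_edgeSet,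
      Sym2.mem_iff, forall_eq_or_imp, forall_eq, not_and_or] at he
    simp only [lollipop] at he
    obtain ⟨⟨⟨hne, hadj⟩, hS1, hS2⟩, hq⟩ := he
    rcases hadj with h | h | h
    · exact absurd h (by tauto)
    · refine ⟨a, b, rfl, h.1, h.2, hS1, hS2, ?_⟩
      have : a < b := by rw [Fin.lt_def]; omega
      simp [emax, max_eq_right this.le]
    · refine ⟨b, a, Sym2.eq_swap, h.1, h.2, hS2, hS1, ?_⟩
      have : b < a := by rw [Fin.lt_def]; omega
      simp [emax, max_eq_left this.le]

lemma B_le (k : ℕ) (S : Finset (Fin (k * k))) :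
    (((lollipop k).edgeFinset.filter (fun e => ∀ v ∈ e, v ∈ S)).filter
      (fun e => ¬ ∀ v ∈ e, v.val < k)).card
      ≤ (S.filter (fun w => k ≤ w.val)).card := by
  apply Finset.card_le_card_of_injOn emax
  · intro e he
    obtain ⟨u, v, _, _, hkv, _, hvS, hev⟩ := B_struct k S e he
    rw [hev]
    exact Finset.mem_filter.mpr ⟨hvS, hkv⟩
  · intro e1 h1 e2 h2 heq
    obtain ⟨u1, v1, he1, hu1, _, _, _, hev1⟩ := B_struct k S e1 (by simpa using h1)
    obtain ⟨u2, v2, he2, hu2, _, _, _, hev2⟩ := B_struct k S e2 (by simpa using h2)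
    rw [he1, he2]
    have hv : v1 = v2 := by rw [← hev1, ← hev2, heq]
    have hu : u1 = u2 := by
      apply Fin.ext; have := hv ▸ hu1; omega
    rw [hv, hu]

-- ==== new material ====

lemma card_clique (k : ℕ) (hk : 1 ≤ k) : (lollipopClique k).card = k := by
  have hkk : ∀ m ∈ Finset.range k, m < k * k := by
    intro m hm
    have := Finset.mem_range.mp hm
    nlinarith
  have h : lollipopClique k = (Finset.range k).attachFin hkk := by
    ext v; simp [lollipopClique, Finset.mem_attachFin]
  rw [h, Finset.card_attachFin, Finset.card_range]

lemma key (k : ℕ) (hk4 : 4 ≤ k) (S : Finset (Fin (k * k))) :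
    2 * edgesIn (lollipop k) S ≤ (k - 1) * S.card := by
  set F := (lollipop k).edgeFinset.filter (fun e => ∀ v ∈ e, v ∈ S) with hF
  have hsplit := Finset.card_filter_add_card_filter_not
    (s := F) (p := fun e => ∀ v ∈ e, v.val < k)
  set a := (S.filter (fun w => w.val < k)).card with ha'
  set b := (S.filter (fun w => k ≤ w.val)).card with hb'
  have hab : a + b = S.card := by
    have h := Finset.card_filter_add_card_filter_not
      (s := S) (p := fun w : Fin (k * k) => w.val < k)
    simpa [not_lt] using h
  have ha : a ≤ k := by
    have hsub : S.filter (fun w => w.val < k) ⊆ lollipopClique k := fun v hv =>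
      Finset.mem_filter.mpr ⟨Finset.mem_univ v, (Finset.mem_filter.mp hv).2⟩
    exact le_trans (Finset.card_le_card hsub) (le_of_eq (card_clique k (by omega)))
  have h2A : 2 * (F.filter (fun e => ∀ v ∈ e, v.val < k)).card ≤ a * (a - 1) := by
    rw [hF, filterA_eq k S]
    exact twoA_le k S
  have hB : (F.filter (fun e => ¬ ∀ v ∈ e, v.val < k)).card ≤ b := B_le k S
  have hedges : edgesIn (lollipop k) S = F.card := by rw [hF]; unfold edgesIn; convert rfl
  calc 2 * edgesIn (lollipop k) S
      = 2 * (F.filter (fun e => ∀ v ∈ e, v.val < k)).card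
        + 2 * (F.filter (fun e => ¬ ∀ v ∈ e, v.val < k)).card := by
        rw [hedges]; omega
    _ ≤ a * (a - 1) + 2 * b := by omega
    _ ≤ a * (k - 1) + (k - 1) * b := by
        gcongr <;> omega
    _ = (k - 1) * (a + b) := by ring
    _ = (k - 1) * S.card := by rw [hab]

lemma clique_edges (k : ℕ) (hk : 2 ≤ k) :
    2 * edgesIn (lollipop k) (lollipopClique k) = k * (k - 1) := by
  set C := lollipopClique k with hC
  set F := (lollipop k).edgeFinset.filter (fun e => ∀ v ∈ e, v ∈ C) with hF
  have hsplit := Finset.card_filter_add_card_filter_not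
    (s := F) (p := fun e => ∀ v ∈ e, v.val < k)
  have hBempty : (F.filter (fun e => ¬ ∀ v ∈ e, v.val < k)) = ∅ := by
    rw [Finset.eq_empty_iff_forall_notMem]
    intro e he
    rw [Finset.mem_filter, hF, Finset.mem_filter] at he
    exact he.2 (fun v hv => (Finset.mem_filter.mp (he.1.2 v hv)).2)
  have hedges : edgesIn (lollipop k) C = F.card := by rw [hF]; unfold edgesIn; convert rfl
  have hA : (F.filter (fun e => ∀ v ∈ e, v.val < k)) = (cliqueSub k C).edgeFinset :=
    filterA_eq k C
  have hCk : C.card = k := card_clique k (by omega)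
  have hdeg : ∀ v ∈ C, (cliqueSub k C).degree v = k - 1 := by
    intro v hv
    have hvk : v.val < k := (Finset.mem_filter.mp hv).2
    have hnb : (cliqueSub k C).neighborFinset v = C.erase v := by
      ext u
      rw [SimpleGraph.mem_neighborFinset, Finset.mem_erase]
      constructor
      · rintro ⟨hne, _, hu, _, _⟩
        exact ⟨fun h => hne h.symm, hu⟩
      · rintro ⟨hne, hu⟩
        exact ⟨fun h => hne h.symm, hv, hu, hvk, (Finset.mem_filter.mp hu).2⟩
    rw [SimpleGraph.degree, hnb, Finset.card_erase_of_mem hv, hCk]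
  have hsum : ∑ v, (cliqueSub k C).degree v = k * (k - 1) := by
    have h1 : ∑ v, (cliqueSub k C).degree v = ∑ v ∈ C, (cliqueSub k C).degree v :=
      (Finset.sum_subset (Finset.subset_univ C)
        (fun v _ hv => degree_zero k C v (by
          intro h; exact hv (Finset.mem_filter.mp h).1))).symm
    rw [h1, Finset.sum_congr rfl hdeg, Finset.sum_const, hCk, smul_eq_mul]
  have hhs := SimpleGraph.sum_degrees_eq_twice_card_edges (cliqueSub k C)
  have hb0 : (F.filter (fun e => ¬ ∀ v ∈ e, v.val < k)).card = 0 :=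
    Finset.card_eq_zero.mpr hBempty
  have hFA : F.card = (cliqueSub k C).edgeFinset.card := by
    rw [← hA]
    omega
  rw [hedges, hFA]
  exact hhs.symm.trans hsum


/-- Density of the densest subgraph: `ρ*_G = max_{∅ ≠ S ⊆ V} ρ(S)`. -/
noncomputable def rhoStar {V : Type*} [Fintype V] [DecidableEq V] (G : SimpleGraph V)
    [DecidableRel G.Adj] : ℝ :=
  sSup {x : ℝ | ∃ S : Finset V, S.Nonempty ∧ rho G S = x}

/-- Density of the densest subgraph at fairness level `α`:
`ρ*_G(α) = max {ρ(S) : ∅ ≠ S ⊆ V, r1(S) = α}`. -/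
noncomputable def rhoStarAlpha {V : Type*} [Fintype V] [DecidableEq V] (G : SimpleGraph V)
    [DecidableRel G.Adj] (Sp : Finset V) (α : ℝ) : ℝ :=
  sSup {x : ℝ | ∃ S : Finset V, S.Nonempty ∧ r1 Sp S = α ∧ rho G S = x}

/-- Price of fairness `PoF(G, α) = 1 - ρ*_G(α) / ρ*_G`. -/
noncomputable def PoF {V : Type*} [Fintype V] [DecidableEq V] (G : SimpleGraph V)
    [DecidableRel G.Adj] (Sp : Finset V) (α : ℝ) : ℝ :=
  1 - rhoStarAlpha G Sp α / rhoStar G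

/-- For a perfect square `n = k² > 9`, every nonempty vertex subset
`S` of the lollipop graph `L_n` satisfies `ρ(S) ≤ k - 1 = √n - 1`, with equality
attained by the vertex set of the clique `C_√n`: the densest subgraph of `L_n`
is the unprotected clique and `ρ*_{L_n} = √n - 1`. -/
theorem stmt6 (k : ℕ) (hk : 2 ≤ k) (hn : 9 < k * k) :
    (∀ S : Finset (Fin (k * k)), S.Nonempty → rho (lollipop k) S ≤ (k : ℝ) - 1) ∧
    rho (lollipop k) (lollipopClique k) = (k : ℝ) - 1 := by
  have hk4 : 4 ≤ k := by nlinarith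
  have hk1 : 1 ≤ k := by omega
  constructor
  · intro S hS
    have hkey := key k hk4 S
    rw [rho, div_le_iff₀ (by exact_mod_cast hS.card_pos)]
    have h1 : ((2 * edgesIn (lollipop k) S : ℕ) : ℝ) ≤ (((k - 1) * S.card : ℕ) : ℝ) :=
      Nat.cast_le.mpr hkey
    push_cast [Nat.cast_sub hk1] at h1
    linarith
  · have h2 := clique_edges k hk
    have hCk := card_clique k hk1
    have hk0 : ((k : ℝ)) ≠ 0 := Nat.cast_ne_zero.mpr (by omega)
    rw [rho, hCk, div_eq_iff hk0]
    have hcast : ((2 * edgesIn (lollipop k) (lollipopClique k) : ℕ) : ℝ)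
        = ((k * (k - 1) : ℕ) : ℝ) := by exact_mod_cast h2
    push_cast [Nat.cast_sub hk1] at hcast
    linear_combination hcast
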